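/- Let K be a 3CNF with m clauses over n variables whose clauses each have three distinct variables, let M be the n×n symmetric matrix with M_{ij} = ∑_k E^{(k)}_{ij} where E^{(k)}_{ij} = 1/2 (resp. −1/2, 0) if x_i, x_j occur in clause k with different (resp. same, not both) polarities and i ≠ j. Then for a ∈ {-1,1}ⁿ corresponding to assignment A (a(i) = 2A(i) − 1), aᵀ M a = 4·N − 3m, where N is the number of clauses NAE-satisfied by A. -/
import Mathlib


open Matrix

/-- The contribution matrix `E^{(k)}` of clause `k` (given by its variable
positions `var` and polarities `pol`): `1/2` if the two variables occur in the
clause with different polarities, `-1/2` if with the same polarity, `0`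
otherwise (in particular on the diagonal). -/
noncomputable def clauseEntry (n : ℕ) (var : Fin 3 → Fin n) (pol : Fin 3 → Bool)
    (p q : Fin n) : ℝ :=
  if p ≠ q then
    ∑ s : Fin 3, ∑ t : Fin 3,
      if var s = p ∧ var t = q then
        (if pol s = pol t then -(1 / 2 : ℝ) else 1 / 2)
      else 0
  else 0

lemma sum_swap4 {α β : Type*} [Fintype α] [Fintype β] (f : α → α → β → β → ℝ) :
    ∑ p : α, ∑ q : α, ∑ s : β, ∑ t : β, f p q s t
      = ∑ s : β, ∑ t : β, ∑ p : α, ∑ q : α, f p q s t := by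
  calc ∑ p : α, ∑ q : α, ∑ s : β, ∑ t : β, f p q s t
      = ∑ p : α, ∑ s : β, ∑ q : α, ∑ t : β, f p q s t :=
        Finset.sum_congr rfl fun p _ => Finset.sum_comm
    _ = ∑ p : α, ∑ s : β, ∑ t : β, ∑ q : α, f p q s t :=
        Finset.sum_congr rfl fun p _ => Finset.sum_congr rfl fun s _ => Finset.sum_comm
    _ = ∑ s : β, ∑ p : α, ∑ t : β, ∑ q : α, f p q s t := Finset.sum_comm
    _ = ∑ s : β, ∑ t : β, ∑ p : α, ∑ q : α, f p q s t :=
        Finset.sum_congr rfl fun s _ => Finset.sum_comm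

lemma clause_quad (n : ℕ) (var : Fin 3 → Fin n) (hinj : Function.Injective var)
    (pol : Fin 3 → Bool) (a : Fin n → ℝ) :
    (∑ p, ∑ q, a p * clauseEntry n var pol p q * a q)
      = ∑ s : Fin 3, ∑ t : Fin 3,
          if s ≠ t then (if pol s = pol t then -(1/2:ℝ) else 1/2) * (a (var s) * a (var t))
          else 0 := by
  have key : ∀ p q, a p * clauseEntry n var pol p q * a q
      = ∑ s : Fin 3, ∑ t : Fin 3,
          if var s = p ∧ var t = q ∧ s ≠ t then
            (if pol s = pol t then -(1/2:ℝ) else 1/2) * (a p * a q) else 0 := by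
    intro p q
    unfold clauseEntry
    by_cases h : p = q
    · subst h
      simp only [ne_eq, not_true_eq_false, if_false, mul_zero, zero_mul]
      symm
      apply Finset.sum_eq_zero
      intro s _
      apply Finset.sum_eq_zero
      intro t _
      rw [if_neg]
      rintro ⟨h1, h2, h3⟩
      exact h3 (hinj (h1.trans h2.symm))
    · simp only [ne_eq, h, not_false_eq_true, if_true]
      simp only [Finset.mul_sum, Finset.sum_mul]
      refine Finset.sum_congr rfl fun s _ => Finset.sum_congr rfl fun t _ => ?_
      have hiff : (var s = p ∧ var t = q) ↔ (var s = p ∧ var t = q ∧ ¬ s = t) := by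
        constructor
        · rintro ⟨h1, h2⟩
          exact ⟨h1, h2, fun e => h (h1.symm.trans (by rw [e]; exact h2))⟩
        · rintro ⟨h1, h2, _⟩; exact ⟨h1, h2⟩
      rw [show (if var s = p ∧ var t = q ∧ ¬ s = t then
            (if pol s = pol t then -(1/2:ℝ) else 1/2) * (a p * a q) else 0)
          = (if var s = p ∧ var t = q then
            (if pol s = pol t then -(1/2:ℝ) else 1/2) * (a p * a q) else 0) from
        if_congr hiff.symm rfl rfl]
      split_ifs <;> ring
  simp only [key]
  rw [sum_swap4]
  refine Finset.sum_congr rfl fun s _ => Finset.sum_congr rfl fun t _ => ?_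
  by_cases hst : s = t
  · subst hst
    simp
  · simp [ite_and, Finset.sum_ite_eq, hst]

/-- `aᵀ M a = 4N - 3m`, where `M` is the matrix associated to a 3CNF and `N`
is the number of clauses NAE-satisfied by the assignment `A`. -/
theorem quadratic_form_counts_nae (n m : ℕ)
    (var : Fin m → Fin 3 → Fin n) (hvar : ∀ k, Function.Injective (var k))
    (pol : Fin m → Fin 3 → Bool)
    (M : Matrix (Fin n) (Fin n) ℝ)
    (hM : ∀ p q, M p q = ∑ k : Fin m, clauseEntry n (var k) (pol k) p q)
    (A : Fin n → Bool) (a : Fin n → ℝ)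
    (ha : ∀ i, a i = if A i then 1 else -1)
    (N : ℕ)
    (hN : N = (Finset.univ.filter (fun k : Fin m =>
      ¬ ((A (var k 0) = pol k 0 ↔ A (var k 1) = pol k 1) ∧
         (A (var k 0) = pol k 0 ↔ A (var k 2) = pol k 2)))).card) :
    a ⬝ᵥ M.mulVec a = 4 * N - 3 * m := by
  have expand : a ⬝ᵥ M.mulVec a = ∑ p, ∑ q, a p * M p q * a q := by
    simp only [dotProduct, mulVec, Finset.mul_sum]
    refine Finset.sum_congr rfl fun p _ => Finset.sum_congr rfl fun q _ => by ring
  have step1 : a ⬝ᵥ M.mulVec a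
      = ∑ k : Fin m, ∑ p, ∑ q, a p * clauseEntry n (var k) (pol k) p q * a q := by
    rw [expand]
    have hpt : ∀ p q, a p * M p q * a q
        = ∑ k, a p * clauseEntry n (var k) (pol k) p q * a q := by
      intro p q
      rw [hM, Finset.mul_sum, Finset.sum_mul]
    simp only [hpt]
    calc ∑ p, ∑ q, ∑ k, a p * clauseEntry n (var k) (pol k) p q * a q
        = ∑ p, ∑ k, ∑ q, a p * clauseEntry n (var k) (pol k) p q * a q :=
          Finset.sum_congr rfl fun p _ => Finset.sum_comm
      _ = ∑ k, ∑ p, ∑ q, a p * clauseEntry n (var k) (pol k) p q * a q :=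
          Finset.sum_comm
  rw [step1]
  have step2 : ∀ k : Fin m, (∑ p, ∑ q, a p * clauseEntry n (var k) (pol k) p q * a q)
      = if ¬ ((A (var k 0) = pol k 0 ↔ A (var k 1) = pol k 1) ∧
             (A (var k 0) = pol k 0 ↔ A (var k 2) = pol k 2)) then (1:ℝ) else -3 := by
    intro k
    rw [clause_quad n (var k) (hvar k) (pol k) a]
    simp only [Fin.sum_univ_three, ha]
    rcases hA0 : A (var k 0) <;> rcases hA1 : A (var k 1) <;> rcases hA2 : A (var k 2) <;>
      rcases hp0 : pol k 0 <;> rcases hp1 : pol k 1 <;> rcases hp2 : pol k 2 <;>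
      simp <;> norm_num
  calc ∑ k : Fin m, (∑ p, ∑ q, a p * clauseEntry n (var k) (pol k) p q * a q)
      = ∑ k : Fin m, (4 * (if ¬ ((A (var k 0) = pol k 0 ↔ A (var k 1) = pol k 1) ∧
             (A (var k 0) = pol k 0 ↔ A (var k 2) = pol k 2)) then (1:ℝ) else 0) - 3) := by
        refine Finset.sum_congr rfl fun k _ => ?_
        rw [step2 k]; split_ifs <;> norm_num
    _ = 4 * N - 3 * m := by
        rw [Finset.sum_sub_distrib, ← Finset.mul_sum, Finset.sum_boole, ← hN]
        simp [mul_comm]
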